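/- Let A, B, C be three non-collinear points in the Euclidean plane, with incenter I and excenter E_A opposite A. Then dist(A,B) · dist(A,C) = dist(A,I) · dist(A,E_A). -/

import Mathlib

/-- The incenter of the triangle `A B C`. -/
noncomputable def incenterPt (A B C : EuclideanSpace ℝ (Fin 2)) : EuclideanSpace ℝ (Fin 2) :=
  (dist B C + dist C A + dist A B)⁻¹ •
    (dist B C • A + dist C A • B + dist A B • C)

/-- The excenter of the triangle `A B C` opposite the first vertex `A`. -/
noncomputable def excenterPt (A B C : EuclideanSpace ℝ (Fin 2)) : EuclideanSpace ℝ (Fin 2) :=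
  (-dist B C + dist C A + dist A B)⁻¹ •
    ((-dist B C) • A + dist C A • B + dist A B • C)

/-- The power-of-a-point identity `|AB|·|AC| = |AI|·|AE_A|`. -/
theorem dist_mul_dist_eq (A B C : EuclideanSpace ℝ (Fin 2))
    (h : AffineIndependent ℝ ![A, B, C]) :
    dist A B * dist A C = dist A (incenterPt A B C) * dist A (excenterPt A B C) := by
  have hAB : A ≠ B := by
    intro hEq
    have := h.injective (show ![A, B, C] 0 = ![A, B, C] 1 by simpa using hEq)
    simp at this
  have hBC : B ≠ C := by
    intro hEq
    have := h.injective (show ![A, B, C] 1 = ![A, B, C] 2 by simpa using hEq)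
    simp at this
  have hCA : C ≠ A := by
    intro hEq
    have := h.injective (show ![A, B, C] 2 = ![A, B, C] 0 by simpa using hEq)
    simp at this
  set a := dist B C with ha_def
  set b := dist C A with hb_def
  set c := dist A B with hc_def
  have ha : 0 < a := dist_pos.2 hBC
  have hb : 0 < b := dist_pos.2 hCA
  have hc : 0 < c := dist_pos.2 hAB
  have hcol : ¬ Collinear ℝ ({A, B, C} : Set (EuclideanSpace ℝ (Fin 2))) := by
    intro hco
    apply affineIndependent_iff_not_collinear.1 h
    refine hco.subset ?_
    rintro x ⟨i, rfl⟩
    fin_cases i <;> simp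
  have htri : a < b + c := by
    rcases (dist_triangle B A C).lt_or_eq with hlt | heq
    · rw [dist_comm B A] at hlt
      rw [dist_comm A C] at hlt
      linarith [hlt]
    · exfalso
      have hw : Wbtw ℝ B A C := dist_add_dist_eq_iff.1 heq.symm
      have : Collinear ℝ ({B, A, C} : Set (EuclideanSpace ℝ (Fin 2))) := hw.collinear
      rw [Set.insert_comm] at this
      exact hcol this
  set u := B - A with hu_def
  set v := C - A with hv_def
  have hu : ‖u‖ = c := by rw [hu_def, ← dist_eq_norm, dist_comm]
  have hv : ‖v‖ = b := by rw [hv_def, ← dist_eq_norm]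
  have huv : ‖u - v‖ = a := by
    rw [hu_def, hv_def, sub_sub_sub_cancel_right, ← dist_eq_norm]
  have hs : (a + b + c) ≠ 0 := by positivity
  have ht0 : (0:ℝ) < -a + b + c := by linarith
  have ht : (-a + b + c) ≠ 0 := ne_of_gt ht0
  -- the common vector
  have hI : incenterPt A B C - A = (a + b + c)⁻¹ • (b • u + c • v) := by
    have hkey : (a + b + c) • (incenterPt A B C - A) = b • u + c • v := by
      rw [incenterPt, smul_sub, smul_smul, mul_inv_cancel₀ hs, one_smul, hu_def, hv_def]
      module
    calc incenterPt A B C - A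
        = (a + b + c)⁻¹ • ((a + b + c) • (incenterPt A B C - A)) := (inv_smul_smul₀ hs _).symm
      _ = (a + b + c)⁻¹ • (b • u + c • v) := by rw [hkey]
  have hE : excenterPt A B C - A = (-a + b + c)⁻¹ • (b • u + c • v) := by
    have hkey : (-a + b + c) • (excenterPt A B C - A) = b • u + c • v := by
      rw [excenterPt, smul_sub, smul_smul, mul_inv_cancel₀ ht, one_smul, hu_def, hv_def]
      module
    calc excenterPt A B C - A
        = (-a + b + c)⁻¹ • ((-a + b + c) • (excenterPt A B C - A)) := (inv_smul_smul₀ ht _).symm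
      _ = (-a + b + c)⁻¹ • (b • u + c • v) := by rw [hkey]
  have key : ‖b • u + c • v‖ ^ 2 = (c * b) * ((a + b + c) * (-a + b + c)) := by
    have h1 : ‖b • u + c • v‖ ^ 2
        = ‖b • u‖ ^ 2 + 2 * inner ℝ (b • u) (c • v) + ‖c • v‖ ^ 2 := norm_add_sq_real _ _
    have h2 : ‖u - v‖ ^ 2 = ‖u‖ ^ 2 - 2 * inner ℝ u v + ‖v‖ ^ 2 := norm_sub_sq_real _ _
    have h3 : (inner ℝ (b • u) (c • v) : ℝ) = b * (c * inner ℝ u v) := by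
      rw [real_inner_smul_left, real_inner_smul_right]
    rw [huv, hu, hv] at h2
    rw [h3, norm_smul, norm_smul, Real.norm_eq_abs, Real.norm_eq_abs,
      abs_of_pos hb, abs_of_pos hc, hu, hv] at h1
    linear_combination h1 + (b * c) * h2
  have hdI : dist A (incenterPt A B C) = (a + b + c)⁻¹ * ‖b • u + c • v‖ := by
    rw [dist_comm, dist_eq_norm, hI, norm_smul, Real.norm_eq_abs,
      abs_of_pos (by positivity : (0:ℝ) < (a + b + c)⁻¹)]
  have hdE : dist A (excenterPt A B C) = (-a + b + c)⁻¹ * ‖b • u + c • v‖ := by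
    rw [dist_comm, dist_eq_norm, hE, norm_smul, Real.norm_eq_abs,
      abs_of_pos (by positivity : (0:ℝ) < (-a + b + c)⁻¹)]
  rw [hdI, hdE]
  have : (a + b + c)⁻¹ * ‖b • u + c • v‖ * ((-a + b + c)⁻¹ * ‖b • u + c • v‖)
      = ((a + b + c) * (-a + b + c))⁻¹ * ‖b • u + c • v‖ ^ 2 := by
    rw [mul_inv]; ring
  rw [this, key, dist_comm A C]
  field_simp
  exact hb_def.symm
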